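/- For any n ≥ 1, there is exactly one reverse-alternating permutation π in S_n with ipk(π) = 0. -/

import Mathlib

/-- The one-line notation of a permutation `π` of `{1,…,n}`, read as a function on 0-based
positions: `permWord π j = π_{j+1}` (values are 1-based; out-of-range positions give `0`). -/
def permWord {n : ℕ} (π : Equiv.Perm (Fin n)) (j : ℕ) : ℕ :=
  if h : j < n then ((π ⟨j, h⟩ : Fin n) : ℕ) + 1 else 0

/-- `π` contains `σ` as a consecutive pattern: some window of consecutive letters of `π`
has standardization `σ`, i.e. is order-isomorphic to the one-line word of `σ`. -/
def ContainsPat {n m : ℕ} (π : Equiv.Perm (Fin n)) (σ : Equiv.Perm (Fin m)) : Prop :=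
  ∃ i : ℕ, i + m ≤ n ∧ ∀ j k : Fin m,
    (permWord π (i + (j : ℕ)) < permWord π (i + (k : ℕ)) ↔ permWord σ j < permWord σ k)

/-- The number of peaks of `π`: 1-based indices `i` with `2 ≤ i ≤ n-1` and
`π_{i-1} < π_i > π_{i+1}`. -/
def pkCount {n : ℕ} (π : Equiv.Perm (Fin n)) : ℕ :=
  ((Finset.Icc 2 (n - 1)).filter fun i =>
    permWord π (i - 2) < permWord π (i - 1) ∧ permWord π i < permWord π (i - 1)).card

/-- The number of left peaks of `π`: 1-based indices `i ∈ [n-1]` that are peaks,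
or `i = 1` with `π_1 > π_2`. -/
def lpkCount {n : ℕ} (π : Equiv.Perm (Fin n)) : ℕ :=
  ((Finset.Icc 1 (n - 1)).filter fun i =>
    (2 ≤ i ∧ permWord π (i - 2) < permWord π (i - 1) ∧ permWord π i < permWord π (i - 1))
      ∨ (i = 1 ∧ permWord π 1 < permWord π 0)).card

/-- The number of peaks of `π⁻¹`. -/
def ipk {n : ℕ} (π : Equiv.Perm (Fin n)) : ℕ := pkCount π⁻¹

/-- The number of left peaks of `π⁻¹`. -/
def ilpk {n : ℕ} (π : Equiv.Perm (Fin n)) : ℕ := lpkCount π⁻¹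

/-- `π` is reverse-alternating: `π_1 > π_2 < π_3 > π_4 < ⋯`, i.e. for each 1-based
`i ∈ [n-1]`, `π_i > π_{i+1}` if `i` is odd and `π_i < π_{i+1}` if `i` is even. -/
def ReverseAlternating {n : ℕ} (π : Equiv.Perm (Fin n)) : Prop :=
  ∀ i : ℕ, 1 ≤ i → i ≤ n - 1 →
    if i % 2 = 1 then permWord π i < permWord π (i - 1)
    else permWord π (i - 1) < permWord π i

namespace Stmt5Aux

def fN (n j : ℕ) : ℕ := if j % 2 = 0 then n / 2 + j / 2 else n / 2 - 1 - j / 2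
def gN (n v : ℕ) : ℕ := if n / 2 ≤ v then 2 * (v - n / 2) else 2 * (n / 2 - 1 - v) + 1

lemma fN_lt (n j : ℕ) (h : j < n) : fN n j < n := by unfold fN; split <;> omega
lemma gN_lt (n v : ℕ) (h : v < n) : gN n v < n := by unfold gN; split <;> omega
lemma gN_fN (n j : ℕ) (h : j < n) : gN n (fN n j) = j := by unfold fN gN; split <;> split <;> omega
lemma fN_gN (n v : ℕ) (h : v < n) : fN n (gN n v) = v := by unfold fN gN; split <;> split <;> omega

def cand (n : ℕ) : Equiv.Perm (Fin n) where
  toFun := fun j => ⟨fN n j, fN_lt n j j.2⟩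
  invFun := fun v => ⟨gN n v, gN_lt n v v.2⟩
  left_inv := fun j => Fin.ext (gN_fN n j j.2)
  right_inv := fun v => Fin.ext (fN_gN n v v.2)

lemma cand_apply (n : ℕ) (j : Fin n) : ((cand n j : Fin n) : ℕ) = fN n (j : ℕ) := rfl
lemma cand_inv_apply (n : ℕ) (v : Fin n) : (((cand n)⁻¹ v : Fin n) : ℕ) = gN n (v : ℕ) := rfl

lemma pw_eq {n : ℕ} (π : Equiv.Perm (Fin n)) {j : ℕ} (h : j < n) :
    permWord π j = ((π ⟨j, h⟩ : Fin n) : ℕ) + 1 := dif_pos h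

lemma pw_pos {n : ℕ} (π : Equiv.Perm (Fin n)) {v : ℕ} (h : v < n) : 1 ≤ permWord π v := by
  rw [pw_eq π h]; omega

lemma pw_inj {n : ℕ} (π : Equiv.Perm (Fin n)) {a b : ℕ} (ha : a < n) (hb : b < n)
    (h : permWord π a = permWord π b) : a = b := by
  rw [pw_eq π ha, pw_eq π hb] at h
  have h2 : π ⟨a, ha⟩ = π ⟨b, hb⟩ := Fin.ext (by omega)
  exact congrArg Fin.val (π.injective h2)

lemma pw_link {n : ℕ} (π : Equiv.Perm (Fin n)) {j v : ℕ} (hj : j < n) (hv : v < n) :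
    permWord π⁻¹ v = j + 1 ↔ permWord π j = v + 1 := by
  rw [pw_eq π⁻¹ hv, pw_eq π hj]
  constructor
  · intro h
    have h2 : π⁻¹ ⟨v, hv⟩ = ⟨j, hj⟩ := Fin.ext (show _ = j by omega)
    have h3 : π ⟨j, hj⟩ = ⟨v, hv⟩ := by rw [← h2]; simp
    rw [h3]
  · intro h
    have h2 : π ⟨j, hj⟩ = ⟨v, hv⟩ := Fin.ext (show _ = v by omega)
    have h3 : π⁻¹ ⟨v, hv⟩ = ⟨j, hj⟩ := by rw [← h2]; simp
    rw [h3]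

end Stmt5Aux

namespace Stmt5Aux

lemma pw_cand {n j : ℕ} (h : j < n) : permWord (cand n) j = fN n j + 1 := pw_eq (cand n) h

lemma pw_cand_inv {n v : ℕ} (h : v < n) : permWord (cand n)⁻¹ v = gN n v + 1 :=
  pw_eq (cand n)⁻¹ h

lemma cand_RA (n : ℕ) : ReverseAlternating (cand n) := by
  intro i h1 h2
  have hi : i < n := by omega
  have hi1 : i - 1 < n := by omega
  rw [pw_cand hi, pw_cand hi1]
  unfold fN
  split <;> split <;> split <;> omega

lemma cand_ipk (n : ℕ) : ipk (cand n) = 0 := by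
  show pkCount (cand n)⁻¹ = 0
  unfold pkCount
  rw [Finset.card_eq_zero, Finset.filter_eq_empty_iff]
  intro i hi
  rw [Finset.mem_Icc] at hi
  have h0 : i - 2 < n := by omega
  have h1 : i - 1 < n := by omega
  have h2 : i < n := by omega
  rw [pw_cand_inv h0, pw_cand_inv h1, pw_cand_inv h2]
  unfold gN
  split <;> split <;> split <;> omega

end Stmt5Aux
namespace Stmt5Aux

lemma unique_aux {n : ℕ} (hn : 1 ≤ n) (π : Equiv.Perm (Fin n))
    (hra : ReverseAlternating π) (hpk : ipk π = 0) : π = cand n := by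
  -- extract no-peak hypothesis
  have h0 : pkCount π⁻¹ = 0 := hpk
  unfold pkCount at h0
  rw [Finset.card_eq_zero, Finset.filter_eq_empty_iff] at h0
  have hnopk : ∀ i, 2 ≤ i → i ≤ n - 1 →
      ¬(permWord π⁻¹ (i-2) < permWord π⁻¹ (i-1) ∧ permWord π⁻¹ i < permWord π⁻¹ (i-1)) :=
    fun i hi1 hi2 => h0 (Finset.mem_Icc.mpr ⟨hi1, hi2⟩)
  -- RA extraction
  have hdesc : ∀ i, i % 2 = 1 → i ≤ n - 1 → permWord π i < permWord π (i-1) := by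
    intro i h1 h2
    have := hra i (by omega) h2
    rwa [if_pos h1] at this
  have hasc2 : ∀ i, i % 2 = 0 → 1 ≤ i → i ≤ n - 1 → permWord π (i-1) < permWord π i := by
    intro i h1 hi1 h2
    have := hra i hi1 h2
    rwa [if_neg (by omega)] at this
  -- ascents of the inverse word propagate rightwards
  have ascup : ∀ b, b + 2 ≤ n → permWord π⁻¹ b < permWord π⁻¹ (b+1) →
      ∀ c, b ≤ c → c + 2 ≤ n → permWord π⁻¹ c < permWord π⁻¹ (c+1) := by
    intro b hb hasc c hbc hc
    induction c, hbc using Nat.le_induction with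
    | base => exact hasc
    | succ c hbc ih =>
      have h1 := ih (by omega)
      have h2 := hnopk (c+2) (by omega) (by omega)
      rw [show c+2-2 = c from by omega, show c+2-1 = c+1 from by omega] at h2
      have hne : permWord π⁻¹ (c+1) ≠ permWord π⁻¹ (c+2) := fun h => by
        have := pw_inj π⁻¹ (show c+1 < n by omega) (show c+2 < n by omega) h; omega
      show permWord π⁻¹ (c+1) < permWord π⁻¹ (c+2)
      omega
  -- value at position 0
  have hn0 : 0 < n := hn
  set M := ((π ⟨0, hn0⟩ : Fin n) : ℕ) with hMdef
  have hMn : M < n := (π ⟨0, hn0⟩).2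
  have hp0 : permWord π 0 = M + 1 := pw_eq π hn0
  have hqM : permWord π⁻¹ M = 0 + 1 := (pw_link π hn0 hMn).mpr hp0
  -- decreasing branch
  have decr1 : ∀ v, v + 1 ≤ M → permWord π⁻¹ (v+1) < permWord π⁻¹ v := by
    intro v hv
    by_contra hcon
    have hne : permWord π⁻¹ v ≠ permWord π⁻¹ (v+1) := fun h => by
      have := pw_inj π⁻¹ (show v < n by omega) (show v+1 < n by omega) h; omega
    have hasc : permWord π⁻¹ v < permWord π⁻¹ (v+1) := by omega
    have ha := ascup v (by omega) hasc (M-1) (by omega) (by omega)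
    rw [show M-1+1 = M from by omega] at ha
    have hpos := pw_pos π⁻¹ (show M - 1 < n by omega)
    omega
  have decr2 : ∀ u v, u < v → v ≤ M → permWord π⁻¹ v < permWord π⁻¹ u := by
    intro u v huv hvM
    induction v, huv using Nat.le_induction with
    | base => exact decr1 u (by omega)
    | succ v hv ih =>
      have h1 := ih (by omega)
      have h2 := decr1 v (by omega)
      omega
  -- increasing branch
  have incr1 : ∀ v, M ≤ v → v + 2 ≤ n → permWord π⁻¹ v < permWord π⁻¹ (v+1) := by
    intro v hv hv2
    refine ascup M (by omega) ?_ v hv (by omega)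
    have hpos := pw_pos π⁻¹ (show M+1 < n by omega)
    have hne : permWord π⁻¹ (M+1) ≠ permWord π⁻¹ M := fun h => by
      have := pw_inj π⁻¹ (show M+1 < n by omega) hMn h; omega
    omega
  have incr2 : ∀ u v, M ≤ u → u < v → v < n → permWord π⁻¹ u < permWord π⁻¹ v := by
    intro u v hMu huv hvn
    induction v, huv using Nat.le_induction with
    | base => exact incr1 u hMu (by omega)
    | succ v hv ih =>
      have h1 := ih (by omega)
      have h2 := incr1 v (by omega) (by omega)
      omega
  -- the key entrywise determination
  have key : ∀ t, (2*t < n → M + t < n ∧ ∀ u, u = M + t → permWord π⁻¹ u = 2*t+1)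
      ∧ (2*t+1 < n → t+1 ≤ M ∧ ∀ v, v + (t+1) = M → permWord π⁻¹ v = 2*t+2) := by
    intro t
    induction t with
    | zero =>
      constructor
      · intro _
        refine ⟨by omega, ?_⟩
        intro u hu
        have h : u = M := by omega
        rw [h]; omega
      · intro h1n
        have h1n' : 1 < n := by omega
        set w := ((π ⟨1, h1n'⟩ : Fin n) : ℕ) with hwdef
        have hwn : w < n := (π ⟨1, h1n'⟩).2
        have hp1 : permWord π 1 = w + 1 := pw_eq π h1n'
        have hqw : permWord π⁻¹ w = 1 + 1 := (pw_link π h1n' hwn).mpr hp1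
        have hd := hdesc 1 (by omega) (by omega)
        rw [show (1:ℕ)-1 = 0 from rfl] at hd
        have hwM : w < M := by omega
        have hweq : w = M - 1 := by
          by_contra hne
          have h5 : permWord π⁻¹ (M-1) < permWord π⁻¹ w :=
            decr2 w (M-1) (by omega) (by omega)
          have hpos := pw_pos π⁻¹ (show M-1 < n by omega)
          have h6 : permWord π⁻¹ (M-1) = permWord π⁻¹ M := by omega
          have := pw_inj π⁻¹ (show M-1 < n by omega) hMn h6
          omega
        refine ⟨by omega, ?_⟩
        intro v hv
        have h : v = w := by omega
        rw [h]; omega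
    | succ t ih =>
      have heven : 2*(t+1) < n →
          M + (t+1) < n ∧ ∀ u, u = M + (t+1) → permWord π⁻¹ u = 2*(t+1)+1 := by
        intro h2
        obtain ⟨hMtn, hqE⟩ := ih.1 (by omega)
        obtain ⟨htM, hqO⟩ := ih.2 (by omega)
        have hqMt : permWord π⁻¹ (M+t) = 2*t+1 := hqE (M+t) rfl
        have hqD : permWord π⁻¹ (M-1-t) = 2*t+2 := hqO (M-1-t) (by omega)
        have hw' : 2*t+2 < n := by omega
        set w := ((π ⟨2*t+2, hw'⟩ : Fin n) : ℕ) with hwd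
        have hwn : w < n := (π ⟨2*t+2, hw'⟩).2
        have hpw : permWord π (2*t+2) = w + 1 := pw_eq π hw'
        have hqw : permWord π⁻¹ w = (2*t+2) + 1 := (pw_link π hw' hwn).mpr hpw
        have ha := hasc2 (2*t+2) (by omega) (by omega) (by omega)
        rw [show 2*t+2-1 = 2*t+1 from by omega] at ha
        have hp21 : permWord π (2*t+1) = (M-1-t) + 1 :=
          (pw_link π (show 2*t+1 < n by omega) (show M-1-t < n by omega)).mp (by omega)
        have hwlb : M - 1 - t < w := by omega
        have hw_gt_M : M < w := by
          by_contra hle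
          rcases eq_or_lt_of_le (show w ≤ M by omega) with he|hl
          · rw [he] at hqw; omega
          · have := decr2 (M-1-t) w hwlb (by omega)
            omega
        have hw_ge : M + t + 1 ≤ w := by
          by_contra hlt
          rcases eq_or_lt_of_le (show w ≤ M + t by omega) with he|hl
          · rw [he] at hqw; omega
          · have := incr2 w (M+t) (by omega) hl (by omega)
            omega
        have hw_eq : w = M + t + 1 := by
          by_contra hne
          have hgt : M + t + 1 < w := by omega
          have hMt1n : M + t + 1 < n := by omega
          have i1 := incr2 (M+t) (M+t+1) (by omega) (by omega) hMt1n
          have i2 := incr2 (M+t+1) w (by omega) hgt hwn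
          have heq : permWord π⁻¹ (M+t+1) = permWord π⁻¹ (M-1-t) := by omega
          have := pw_inj π⁻¹ hMt1n (by omega) heq
          omega
        refine ⟨by omega, ?_⟩
        intro u hu
        have h : u = w := by omega
        rw [h]; omega
      have hodd : 2*(t+1)+1 < n →
          (t+1)+1 ≤ M ∧ ∀ v, v + ((t+1)+1) = M → permWord π⁻¹ v = 2*(t+1)+2 := by
        intro h3
        obtain ⟨hMt1n, hqE'⟩ := heven (by omega)
        obtain ⟨htM, hqO⟩ := ih.2 (by omega)
        have hqMt1 : permWord π⁻¹ (M+t+1) = 2*t+3 := by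
          have := hqE' (M+t+1) (by omega); omega
        have hqD : permWord π⁻¹ (M-1-t) = 2*t+2 := hqO (M-1-t) (by omega)
        have hv' : 2*t+3 < n := by omega
        set v := ((π ⟨2*t+3, hv'⟩ : Fin n) : ℕ) with hvd
        have hvn : v < n := (π ⟨2*t+3, hv'⟩).2
        have hpv : permWord π (2*t+3) = v + 1 := pw_eq π hv'
        have hqv : permWord π⁻¹ v = (2*t+3) + 1 := (pw_link π hv' hvn).mpr hpv
        have hd := hdesc (2*t+3) (by omega) (by omega)
        rw [show 2*t+3-1 = 2*t+2 from by omega] at hd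
        have hp22 : permWord π (2*t+2) = (M+t+1) + 1 :=
          (pw_link π (show 2*t+2 < n by omega) (show M+t+1 < n by omega)).mp (by omega)
        have hv_ub : v < M + t + 1 := by omega
        have hv_lt_M : v < M := by
          by_contra hge
          have := incr2 v (M+t+1) (by omega) (by omega) (by omega)
          omega
        have hv_lt : v < M - 1 - t := by
          by_contra hge
          rcases eq_or_lt_of_le (show M - 1 - t ≤ v by omega) with he|hl
          · rw [← he] at hqv; omega
          · have := decr2 (M-1-t) v hl (by omega)
            omega
        have htM2 : t + 2 ≤ M := by omega
        have hveq : v = M - 2 - t := by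
          by_contra hne
          have hlt : v < M - 2 - t := by omega
          have d1 := decr2 v (M-2-t) hlt (by omega)
          have d2 := decr2 (M-2-t) (M-1-t) (by omega) (by omega)
          have heq : permWord π⁻¹ (M-2-t) = permWord π⁻¹ (M+t+1) := by omega
          have := pw_inj π⁻¹ (by omega) (by omega) heq
          omega
        refine ⟨by omega, ?_⟩
        intro u hu
        have h : u = v := by omega
        rw [h]; omega
      exact ⟨heven, hodd⟩
  -- M = n / 2
  have hM2 : M = n / 2 := by
    rcases Nat.lt_or_ge n 2 with h|h
    · omega
    · by_cases hp : n % 2 = 0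
      · have h1 := ((key (n/2 - 1)).1 (by omega)).1
        have h2 := ((key (n/2 - 1)).2 (by omega)).1
        omega
      · by_cases h3 : n = 3
        · subst h3
          have h1 := ((key 1).1 (by omega)).1
          have h2 := ((key 0).2 (by omega)).1
          omega
        · have h1 := ((key ((n-1)/2)).1 (by omega)).1
          have h2 := ((key ((n-3)/2)).2 (by omega)).1
          omega
  -- conclude
  apply Equiv.ext
  intro j
  apply Fin.ext
  show ((π j : Fin n) : ℕ) = fN n (j : ℕ)
  have hjn : (j : ℕ) < n := j.2
  have hx : permWord π (j : ℕ) = ((π j : Fin n) : ℕ) + 1 := pw_eq π hjn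
  have hqx : permWord π⁻¹ ((π j : Fin n) : ℕ) = (j : ℕ) + 1 :=
    (pw_link π hjn (π j).2).mpr hx
  by_cases hpar : (j : ℕ) % 2 = 0
  · obtain ⟨h1, h2⟩ := (key ((j : ℕ)/2)).1 (by omega)
    have h3 := h2 (M + (j : ℕ)/2) rfl
    have h4 : permWord π⁻¹ ((π j : Fin n) : ℕ) = permWord π⁻¹ (M + (j : ℕ)/2) := by omega
    have h5 := pw_inj π⁻¹ (π j).2 (by omega) h4
    unfold fN
    rw [if_pos hpar]
    omega
  · obtain ⟨h1, h2⟩ := (key ((j : ℕ)/2)).2 (by omega)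
    have h3 := h2 (M - 1 - (j : ℕ)/2) (by omega)
    have h4 : permWord π⁻¹ ((π j : Fin n) : ℕ) = permWord π⁻¹ (M - 1 - (j : ℕ)/2) := by omega
    have h5 := pw_inj π⁻¹ (π j).2 (by omega) h4
    unfold fN
    rw [if_neg hpar]
    omega

end Stmt5Aux

/-- For any `n ≥ 1`, there is exactly one reverse-alternating permutation in `S_n`
whose inverse has no peaks. -/
theorem stmt5 (n : ℕ) (hn : 1 ≤ n) :
    ∃! π : Equiv.Perm (Fin n), ReverseAlternating π ∧ ipk π = 0 := by
  refine ⟨Stmt5Aux.cand n, ⟨Stmt5Aux.cand_RA n, Stmt5Aux.cand_ipk n⟩, ?_⟩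
  intro π ⟨h1, h2⟩
  exact Stmt5Aux.unique_aux hn π h1 h2
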